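/- Let b ∈ ℂ and f : ℤ → ℂ satisfy (m-n)·(f(m) + f(n) - f(m+n) + b²·n·m) = 0 for all m, n ∈ ℤ (the case λ = 1). Then f(n) = n·f(1) + (b²/2)·n·(n-1) for all n ∈ ℤ. -/

import Mathlib

theorem stmt_10 (b : ℂ) (f : ℤ → ℂ)
    (h : ∀ m n : ℤ,
      ((m : ℂ) - (n : ℂ)) * (f m + f n - f (m + n) + b ^ 2 * (n : ℂ) * (m : ℂ)) = 0) :
    ∀ n : ℤ, f n = (n : ℂ) * f 1 + (b ^ 2 / 2) * (n : ℂ) * ((n : ℂ) - 1) := by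
  have key : ∀ m n : ℤ, m ≠ n → f (m + n) = f m + f n + b ^ 2 * n * m := by
    intro m n hmn
    have hne : ((m : ℂ) - (n : ℂ)) ≠ 0 := by
      rw [sub_ne_zero]
      exact_mod_cast hmn
    have := h m n
    rcases mul_eq_zero.mp this with h1 | h2
    · exact absurd h1 hne
    · linear_combination -h2
  have f0 : f 0 = 0 := by
    have := key 1 0 (by norm_num)
    simpa using this.symm
  have fneg1 : f (-1) = b ^ 2 - f 1 := by
    have := key 1 (-1) (by norm_num)
    norm_num [f0] at this
    linear_combination -this
  have f2 : f 2 = 2 * f 1 + b ^ 2 := by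
    have := key 2 (-1) (by norm_num)
    norm_num [fneg1] at this
    linear_combination -this
  have step : ∀ n : ℤ, f (n + 1) = f n + f 1 + b ^ 2 * n := by
    intro n
    by_cases hn : n = 1
    · subst hn; norm_num [f2]; ring
    · have := key n 1 hn
      push_cast at this ⊢
      linear_combination this
  intro n
  induction n using Int.induction_on with
  | zero => simpa using f0
  | succ k ih =>
    have := step k
    push_cast at this ih ⊢
    linear_combination this + ih
  | pred k ih =>
    have := step (-(k : ℤ) - 1)
    have e : -(k : ℤ) - 1 + 1 = -(k : ℤ) := by ring
    rw [e] at this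
    push_cast at this ih ⊢
    linear_combination ih - this
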